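/- arXiv:1708.04868 — 6 statements merged into one kernel-verified Lean document; each statement's English description precedes it below -/
import Mathlib

section
/- Let Z be a compact topological space, let d and d' be two metrics on Z both inducing its topology, and let f : Z → Z be continuous. Then for every ε > 0 there exists μ > 0 such that S_ε((Z,d), f) ⊆ S_μ((Z,d'), f). -/
open Filter Topology

/-- `(x, y)` is a scrambled pair of `f` with respect to the distance function `d`. -/
def scrambledPair {Z : Type*} (d : Z → Z → ℝ) (f : Z → Z) (x y : Z) : Prop :=
  liminf (fun n : ℕ => d (f^[n] x) (f^[n] y)) atTop = 0 ∧
    0 < limsup (fun n : ℕ => d (f^[n] x) (f^[n] y)) atTop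

/-- Uniform comparison of two compact metrics inducing the same topology. -/
lemma dist_compare {Z : Type*} (m m' : MetricSpace Z)
    (h : m.toUniformSpace.toTopologicalSpace = m'.toUniformSpace.toTopologicalSpace)
    (hcomp : @CompactSpace Z m'.toUniformSpace.toTopologicalSpace) :
    ∀ ε > (0 : ℝ), ∃ δ > (0 : ℝ), ∀ a b : Z,
      @dist Z m'.toDist a b < δ → @dist Z m.toDist a b < ε := by
  have hc : @UniformContinuous Z Z m'.toUniformSpace m.toUniformSpace id := by
    refine @CompactSpace.uniformContinuous_of_continuous Z Z m'.toUniformSpace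
      m.toUniformSpace hcomp id ?_
    exact (continuous_id_iff_le (t := m'.toUniformSpace.toTopologicalSpace)
      (t' := m.toUniformSpace.toTopologicalSpace)).2 h.ge
  rw [@Metric.uniformContinuous_iff Z Z m'.toPseudoMetricSpace m.toPseudoMetricSpace] at hc
  intro ε hε
  obtain ⟨δ, hδ, hδ'⟩ := hc ε hε
  exact ⟨δ, hδ, fun a b hab => hδ' hab⟩

/-- A compact metric space has uniformly bounded distances. -/
lemma dist_bdd {Z : Type*} (m : MetricSpace Z)
    (hcomp : @CompactSpace Z m.toUniformSpace.toTopologicalSpace) :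
    ∃ C : ℝ, ∀ a b : Z, @dist Z m.toDist a b ≤ C := by
  letI := m
  haveI : CompactSpace Z := hcomp
  obtain ⟨C, hC⟩ := (Metric.isBounded_iff (α := Z)).1 (isCompact_univ (X := Z)).isBounded
  exact ⟨C, fun a b => hC (Set.mem_univ a) (Set.mem_univ b)⟩

/-- If `Z` is a compact topological space, `m` and `m'` are two metrics
on `Z`, both inducing its topology, and `f : Z → Z` is continuous, then for every
`ε > 0` there exists `μ > 0` with `S_ε((Z,d), f) ⊆ S_μ((Z,d'), f)`. -/
theorem stmt1 {Z : Type*} [tZ : TopologicalSpace Z] [CompactSpace Z]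
    (m m' : MetricSpace Z)
    (hm : m.toUniformSpace.toTopologicalSpace = tZ)
    (hm' : m'.toUniformSpace.toTopologicalSpace = tZ)
    (f : Z → Z) (hf : Continuous f) :
    ∀ ε > (0 : ℝ), ∃ μ > (0 : ℝ),
      {p : Z × Z | scrambledPair (@dist Z m.toDist) f p.1 p.2 ∧
          ε < limsup (fun n : ℕ => @dist Z m.toDist (f^[n] p.1) (f^[n] p.2)) atTop} ⊆
        {p : Z × Z | scrambledPair (@dist Z m'.toDist) f p.1 p.2 ∧
          μ < limsup (fun n : ℕ => @dist Z m'.toDist (f^[n] p.1) (f^[n] p.2)) atTop} := by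
  have hcm : @CompactSpace Z m.toUniformSpace.toTopologicalSpace := by
    rw [hm]; infer_instance
  have hcm' : @CompactSpace Z m'.toUniformSpace.toTopologicalSpace := by
    rw [hm']; infer_instance
  intro ε hε
  obtain ⟨δ, hδ, hδ'⟩ := dist_compare m m' (by rw [hm, hm']) hcm' ε hε
  obtain ⟨C, hC⟩ := dist_bdd m hcm
  obtain ⟨C', hC'⟩ := dist_bdd m' hcm'
  refine ⟨δ / 2, by positivity, ?_⟩
  rintro ⟨x, y⟩ ⟨⟨hlinf, _⟩, hlsup⟩
  set u : ℕ → ℝ := fun n => @dist Z m.toDist (f^[n] x) (f^[n] y) with hu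
  set v : ℕ → ℝ := fun n => @dist Z m'.toDist (f^[n] x) (f^[n] y) with hv
  have hu0 : ∀ n, (0 : ℝ) ≤ u n := fun n => @dist_nonneg Z m.toPseudoMetricSpace _ _
  have hv0 : ∀ n, (0 : ℝ) ≤ v n := fun n => @dist_nonneg Z m'.toPseudoMetricSpace _ _
  have hub : IsBoundedUnder (· ≤ ·) atTop u := isBoundedUnder_of ⟨C, fun n => hC _ _⟩
  have hulb : IsBoundedUnder (· ≥ ·) atTop u := isBoundedUnder_of ⟨0, hu0⟩
  have hvb : IsBoundedUnder (· ≤ ·) atTop v := isBoundedUnder_of ⟨C', fun n => hC' _ _⟩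
  have hvlb : IsBoundedUnder (· ≥ ·) atTop v := isBoundedUnder_of ⟨0, hv0⟩
  -- limsup estimate
  have hfreq : ∃ᶠ n in atTop, ε < u n :=
    frequently_lt_of_lt_limsup hulb.isCoboundedUnder_le hlsup
  have hfreq' : ∃ᶠ n in atTop, δ ≤ v n := by
    refine hfreq.mono fun n hn => le_of_not_gt fun hvn => ?_
    exact absurd (hδ' _ _ hvn) (not_lt.2 hn.le)
  have hls : δ ≤ limsup v atTop := le_limsup_of_frequently_le hfreq' hvb
  have hμ : δ / 2 < limsup v atTop := lt_of_lt_of_le (by linarith) hls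
  -- liminf estimate
  have hlinf' : liminf v atTop = 0 := by
    refine le_antisymm ?_ (le_liminf_of_le hvb.isCoboundedUnder_ge
      (Eventually.of_forall hv0))
    refine le_of_forall_pos_le_add fun η hη => ?_
    obtain ⟨δ', hδ'0, hδ''⟩ := dist_compare m' m (by rw [hm, hm']) hcm η hη
    have : ∃ᶠ n in atTop, u n < δ' :=
      frequently_lt_of_liminf_lt hub.isCoboundedUnder_ge (by rw [hlinf]; exact hδ'0)
    have : ∃ᶠ n in atTop, v n ≤ η := this.mono fun n hn => (hδ'' _ _ hn).le
    have := liminf_le_of_frequently_le this hvlb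
    linarith
  exact ⟨⟨hlinf', lt_trans (by positivity) hμ⟩, hμ⟩
end

section
/- Let Γ be a nonempty set and φ : Γ → Γ a map with no periodic point. Then for all finite nonempty subsets A, B of Γ, the set {n ∈ ℤ : φ^n(A) ∩ B ≠ ∅} (where for n ≥ 0, φ^n(A) is the image of A under the n-fold iterate of φ, and for n < 0, φ^n(A) is the preimage of A under the |n|-fold iterate of φ) is finite and has at most card(A)·card(B) elements. -/
/-- The set of integers `n` such that `φ^n(A) ∩ B ≠ ∅`, where for `n ≥ 0`, `φ^n(A)` is
the image of `A` under the `n`-fold iterate of `φ`, and for `n < 0` it is the preimage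
of `A` under the `|n|`-fold iterate of `φ`. -/
def hitTimes {Γ : Type*} (φ : Γ → Γ) (A B : Set Γ) : Set ℤ :=
  {n : ℤ | (0 ≤ n ∧ ∃ a ∈ A, φ^[n.toNat] a ∈ B) ∨ (n < 0 ∧ ∃ b ∈ B, φ^[(-n).toNat] b ∈ A)}

/-- If `φ : Γ → Γ` has no periodic point, then for all finite nonempty
subsets `A, B` of `Γ`, the set `{n ∈ ℤ : φ^n(A) ∩ B ≠ ∅}` is finite and has at most
`card A * card B` elements. -/
theorem stmt4 {Γ : Type*} [Nonempty Γ] (φ : Γ → Γ)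
    (hφ : ¬ ∃ a : Γ, ∃ n : ℕ, 1 ≤ n ∧ φ^[n] a = a)
    (A B : Set Γ) (hA : A.Finite) (hB : B.Finite) (hA' : A.Nonempty) (hB' : B.Nonempty) :
    (hitTimes φ A B).Finite ∧ (hitTimes φ A B).ncard ≤ A.ncard * B.ncard := by
  classical
  set S := hitTimes φ A B with hS
  have hiter : ∀ (x : Γ) (k l : ℕ), φ^[k] x = φ^[l] x → k = l := by
    intro x k l h
    by_contra hne
    wlog hkl : k < l generalizing k l
    · exact this l k h.symm (Ne.symm hne) (by omega)
    exact hφ ⟨φ^[k] x, l - k, by omega, by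
      rw [← Function.iterate_add_apply, show l - k + k = l by omega]; exact h.symm⟩
  have key : ∀ n ∈ S, ∃ p : Γ × Γ, p.1 ∈ A ∧ p.2 ∈ B ∧
      ((0 ≤ n ∧ φ^[n.toNat] p.1 = p.2) ∨ (n < 0 ∧ φ^[(-n).toNat] p.2 = p.1)) := by
    intro n hn
    rcases hn with ⟨h0, a, ha, hab⟩ | ⟨h0, b, hb, hba⟩
    · exact ⟨(a, φ^[n.toNat] a), ha, hab, Or.inl ⟨h0, rfl⟩⟩
    · exact ⟨(φ^[(-n).toNat] b, b), hba, hb, Or.inr ⟨h0, rfl⟩⟩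
  choose! g hg1 hg2 hg3 using key
  have hmaps : Set.MapsTo g S (A ×ˢ B) := fun n hn => ⟨hg1 n hn, hg2 n hn⟩
  have hinj : Set.InjOn g S := by
    intro n hn m hm heq
    rcases hg3 n hn with ⟨hn0, hne⟩ | ⟨hn0, hne⟩ <;>
      rcases hg3 m hm with ⟨hm0, hme⟩ | ⟨hm0, hme⟩ <;> rw [heq] at hne
    · have := hiter (g m).1 n.toNat m.toNat (hne.trans hme.symm)
      omega
    · exfalso
      apply hφ
      refine ⟨(g m).2, n.toNat + (-m).toNat, by omega, ?_⟩
      rw [Function.iterate_add_apply, hme, hne]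
    · exfalso
      apply hφ
      refine ⟨(g m).1, (-n).toNat + m.toNat, by omega, ?_⟩
      rw [Function.iterate_add_apply, hme, hne]
    · have := hiter (g m).2 (-n).toNat (-m).toNat (hne.trans hme.symm)
      omega
  have hABfin : (A ×ˢ B).Finite := hA.prod hB
  have himg : (g '' S).Finite := hABfin.subset (Set.mapsTo_iff_image_subset.mp hmaps)
  have hfin : S.Finite := himg.of_finite_image hinj
  refine ⟨hfin, ?_⟩
  calc S.ncard = (g '' S).ncard := (Set.ncard_image_of_injOn hinj).symm
    _ ≤ (A ×ˢ B).ncard := Set.ncard_le_ncard (Set.mapsTo_iff_image_subset.mp hmaps) hABfin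
    _ = (hA.toFinset ×ˢ hB.toFinset : Finset (Γ × Γ)).card := by
        rw [← Set.ncard_coe_finset]
        congr 1
        simp [Set.Finite.coe_toFinset]
    _ = A.ncard * B.ncard := by
        rw [Finset.card_product, ← Set.ncard_eq_toFinset_card A hA,
          ← Set.ncard_eq_toFinset_card B hB]
end

section
/- Suppose φ : Γ → Γ has no periodic point. Let (x, y) ∈ S(X^Γ, σ_φ) be a scrambled pair, and let z, w ∈ X^Γ be such that there is a finite subset F ⊆ Γ with x_α = z_α and y_α = w_α for all α ∈ Γ \ F. Then (z, w) ∈ S(X^Γ, σ_φ) and limsup_{t→∞} D(σ_φ^t(x), σ_φ^t(y)) = limsup_{t→∞} D(σ_φ^t(z), σ_φ^t(w)). -/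
open Filter Topology

open scoped Classical in
/-- The metric `D` on `X^Γ`, via a fixed bijection `e : ℕ ≃ Γ`. -/
noncomputable def gsD {X Γ : Type*} (e : ℕ ≃ Γ) (x y : Γ → X) : ℝ :=
  ∑' n : ℕ, (if x (e n) = y (e n) then (0 : ℝ) else 1) / 2 ^ (n + 1)

/-- The generalized shift `σ_φ`. -/
def gshift {X Γ : Type*} (φ : Γ → Γ) : (Γ → X) → (Γ → X) := fun x => x ∘ φ

open scoped Classical

private lemma sumHalf : Summable fun n : ℕ => (1:ℝ)/2^(n+1) := by
  refine (summable_geometric_two' 1).congr fun n => ?_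
  rw [pow_succ]; ring

private lemma tsumHalf : ∑' n : ℕ, (1:ℝ)/2^(n+1) = 1 := by
  have h : (fun n : ℕ => (1:ℝ)/2^(n+1)) = fun n : ℕ => (1:ℝ)/2/2^n := by
    funext n; rw [pow_succ]; ring
  rw [h, tsum_geometric_two' 1]

private lemma summable_aux (f : ℕ → ℝ) (h0 : ∀ n, 0 ≤ f n) (h1 : ∀ n, f n ≤ 1) :
    Summable fun n => f n / 2 ^ (n + 1) := by
  refine Summable.of_nonneg_of_le (fun n => div_nonneg (h0 n) (by positivity)) (fun n => ?_) sumHalf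
  exact div_le_div_of_nonneg_right (h1 n) (by positivity)

private lemma tsum_aux_le (f : ℕ → ℝ) (h0 : ∀ n, 0 ≤ f n) (h1 : ∀ n, f n ≤ 1) :
    ∑' n, f n / 2 ^ (n + 1) ≤ 1 := by
  rw [← tsumHalf]
  refine Summable.tsum_le_tsum (fun n => ?_) (summable_aux f h0 h1) sumHalf
  exact div_le_div_of_nonneg_right (h1 n) (by positivity)

private lemma orbit_inj {Γ : Type*} (φ : Γ → Γ)
    (hφ : ¬ ∃ a : Γ, ∃ n : ℕ, 1 ≤ n ∧ φ^[n] a = a) (a : Γ) :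
    Function.Injective fun t : ℕ => φ^[t] a := by
  have key : ∀ s t : ℕ, s < t → φ^[s] a ≠ φ^[t] a := by
    intro s t hst heq
    refine hφ ⟨φ^[s] a, t - s, by omega, ?_⟩
    rw [← Function.iterate_add_apply]
    have h' : t - s + s = t := by omega
    rw [h', ← heq]
  intro s t h
  rcases lt_trichotomy s t with hlt | heq | hgt
  · exact absurd h (key s t hlt)
  · exact heq
  · exact absurd h.symm (key t s hgt)

private lemma gshift_iter {X Γ : Type*} (φ : Γ → Γ) (x : Γ → X) (t : ℕ) (α : Γ) :
    (gshift φ)^[t] x α = x (φ^[t] α) := by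
  induction t generalizing x with
  | zero => simp
  | succ t ih =>
    rw [Function.iterate_succ_apply, ih]
    simp [gshift, Function.iterate_succ_apply']

private lemma limsup_le_aux (a b : ℕ → ℝ) (ha0 : ∀ t, 0 ≤ a t) (ha1 : ∀ t, a t ≤ 1)
    (hb0 : ∀ t, 0 ≤ b t) (hb1 : ∀ t, b t ≤ 1)
    (h : Tendsto (fun t => a t - b t) atTop (𝓝 0)) :
    limsup a atTop ≤ limsup b atTop := by
  refine le_of_forall_pos_le_add fun ε hε => ?_
  have hev : ∀ᶠ t in atTop, a t ≤ b t + ε := by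
    filter_upwards [NormedAddCommGroup.tendsto_nhds_zero.mp h ε hε] with t ht
    rw [Real.norm_eq_abs, abs_sub_lt_iff] at ht
    linarith [ht.1]
  have cobdd_a : IsCoboundedUnder (· ≤ ·) atTop a :=
    isCoboundedUnder_le_of_eventually_le atTop (Eventually.of_forall ha0)
  have bdd_be : IsBoundedUnder (· ≤ ·) atTop (fun t => b t + ε) :=
    isBoundedUnder_of ⟨1 + ε, fun t => by linarith [hb1 t]⟩
  have bdd_b : IsBoundedUnder (· ≤ ·) atTop b := isBoundedUnder_of ⟨1, hb1⟩
  have cobdd_b : IsCoboundedUnder (· ≤ ·) atTop b :=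
    isCoboundedUnder_le_of_eventually_le atTop (Eventually.of_forall hb0)
  calc limsup a atTop ≤ limsup (fun t => b t + ε) atTop :=
        limsup_le_limsup hev cobdd_a bdd_be
    _ = limsup b atTop + ε := limsup_add_const atTop b ε bdd_b cobdd_b

private lemma limsup_eq_aux (a b : ℕ → ℝ) (ha0 : ∀ t, 0 ≤ a t) (ha1 : ∀ t, a t ≤ 1)
    (hb0 : ∀ t, 0 ≤ b t) (hb1 : ∀ t, b t ≤ 1)
    (h : Tendsto (fun t => a t - b t) atTop (𝓝 0)) :
    limsup a atTop = limsup b atTop := by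
  have h' : Tendsto (fun t => b t - a t) atTop (𝓝 0) := by
    have := h.neg; simpa [neg_sub] using this
  exact le_antisymm (limsup_le_aux a b ha0 ha1 hb0 hb1 h)
    (limsup_le_aux b a hb0 hb1 ha0 ha1 h')

private lemma liminf_le_aux (a b : ℕ → ℝ) (ha0 : ∀ t, 0 ≤ a t) (ha1 : ∀ t, a t ≤ 1)
    (hb0 : ∀ t, 0 ≤ b t) (hb1 : ∀ t, b t ≤ 1)
    (h : Tendsto (fun t => a t - b t) atTop (𝓝 0)) :
    liminf b atTop ≤ liminf a atTop := by
  refine le_of_forall_pos_le_add fun ε hε => ?_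
  have hev : ∀ᶠ t in atTop, b t ≤ a t + ε := by
    filter_upwards [NormedAddCommGroup.tendsto_nhds_zero.mp h ε hε] with t ht
    rw [Real.norm_eq_abs, abs_sub_lt_iff] at ht
    linarith [ht.2]
  have bdd_b : IsBoundedUnder (· ≥ ·) atTop b := isBoundedUnder_of ⟨0, hb0⟩
  have cobdd_ae : IsCoboundedUnder (· ≥ ·) atTop (fun t => a t + ε) :=
    isCoboundedUnder_ge_of_eventually_le atTop
      (Eventually.of_forall fun t => (show a t + ε ≤ 1 + ε by linarith [ha1 t]))
  have bdd_a : IsBoundedUnder (· ≥ ·) atTop a := isBoundedUnder_of ⟨0, ha0⟩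
  have cobdd_a : IsCoboundedUnder (· ≥ ·) atTop a :=
    isCoboundedUnder_ge_of_eventually_le atTop (Eventually.of_forall ha1)
  calc liminf b atTop ≤ liminf (fun t => a t + ε) atTop :=
        liminf_le_liminf hev bdd_b cobdd_ae
    _ = liminf a atTop + ε := liminf_add_const atTop a ε cobdd_a bdd_a

private lemma liminf_eq_aux (a b : ℕ → ℝ) (ha0 : ∀ t, 0 ≤ a t) (ha1 : ∀ t, a t ≤ 1)
    (hb0 : ∀ t, 0 ≤ b t) (hb1 : ∀ t, b t ≤ 1)
    (h : Tendsto (fun t => a t - b t) atTop (𝓝 0)) :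
    liminf a atTop = liminf b atTop := by
  have h' : Tendsto (fun t => b t - a t) atTop (𝓝 0) := by
    have := h.neg; simpa [neg_sub] using this
  exact le_antisymm (liminf_le_aux b a hb0 hb1 ha0 ha1 h')
    (liminf_le_aux a b ha0 ha1 hb0 hb1 h)

/-- Suppose `φ : Γ → Γ` has no periodic point. If `(x, y)` is a scrambled
pair of `(X^Γ, σ_φ)` and `z, w ∈ X^Γ` agree with `x, y` respectively outside a finite
set `F ⊆ Γ`, then `(z, w)` is a scrambled pair and
`limsup D(σ_φ^t x, σ_φ^t y) = limsup D(σ_φ^t z, σ_φ^t w)`. -/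
theorem stmt5 {X Γ : Type*} [TopologicalSpace X] [DiscreteTopology X] [Finite X]
    [Nontrivial X] [Countable Γ] [Infinite Γ] (e : ℕ ≃ Γ) (φ : Γ → Γ)
    (hφ : ¬ ∃ a : Γ, ∃ n : ℕ, 1 ≤ n ∧ φ^[n] a = a)
    (x y z w : Γ → X)
    (hxy : scrambledPair (gsD e) (gshift φ) x y)
    (F : Set Γ) (hF : F.Finite)
    (hxz : ∀ α ∉ F, x α = z α) (hyw : ∀ α ∉ F, y α = w α) :
    scrambledPair (gsD e) (gshift φ) z w ∧
      limsup (fun t : ℕ => gsD e ((gshift φ)^[t] x) ((gshift φ)^[t] y)) atTop =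
        limsup (fun t : ℕ => gsD e ((gshift φ)^[t] z) ((gshift φ)^[t] w)) atTop := by
  classical
  set A : ℕ → ℝ := fun t => gsD e ((gshift φ)^[t] x) ((gshift φ)^[t] y) with hA
  set B : ℕ → ℝ := fun t => gsD e ((gshift φ)^[t] z) ((gshift φ)^[t] w) with hB
  -- term functions
  set fA : ℕ → ℕ → ℝ := fun t n =>
    (if x (φ^[t] (e n)) = y (φ^[t] (e n)) then (0:ℝ) else 1) / 2 ^ (n + 1) with hfA
  set fB : ℕ → ℕ → ℝ := fun t n =>
    (if z (φ^[t] (e n)) = w (φ^[t] (e n)) then (0:ℝ) else 1) / 2 ^ (n + 1) with hfB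
  have hAval : ∀ t, A t = ∑' n, fA t n := by
    intro t
    simp only [hA, gsD, hfA]
    exact tsum_congr fun n => by rw [gshift_iter, gshift_iter]
  have hBval : ∀ t, B t = ∑' n, fB t n := by
    intro t
    simp only [hB, gsD, hfB]
    exact tsum_congr fun n => by rw [gshift_iter, gshift_iter]
  have hindA : ∀ t n, 0 ≤ (if x (φ^[t] (e n)) = y (φ^[t] (e n)) then (0:ℝ) else 1) ∧
      (if x (φ^[t] (e n)) = y (φ^[t] (e n)) then (0:ℝ) else 1) ≤ 1 := by
    intro t n; split_ifs <;> norm_num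
  have hindB : ∀ t n, 0 ≤ (if z (φ^[t] (e n)) = w (φ^[t] (e n)) then (0:ℝ) else 1) ∧
      (if z (φ^[t] (e n)) = w (φ^[t] (e n)) then (0:ℝ) else 1) ≤ 1 := by
    intro t n; split_ifs <;> norm_num
  have hsumA : ∀ t, Summable (fA t) := fun t =>
    summable_aux _ (fun n => (hindA t n).1) (fun n => (hindA t n).2)
  have hsumB : ∀ t, Summable (fB t) := fun t =>
    summable_aux _ (fun n => (hindB t n).1) (fun n => (hindB t n).2)
  have hA0 : ∀ t, 0 ≤ A t := by
    intro t; rw [hAval]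
    exact tsum_nonneg fun n => div_nonneg (hindA t n).1 (by positivity)
  have hA1 : ∀ t, A t ≤ 1 := by
    intro t; rw [hAval]
    exact tsum_aux_le _ (fun n => (hindA t n).1) (fun n => (hindA t n).2)
  have hB0 : ∀ t, 0 ≤ B t := by
    intro t; rw [hBval]
    exact tsum_nonneg fun n => div_nonneg (hindB t n).1 (by positivity)
  have hB1 : ∀ t, B t ≤ 1 := by
    intro t; rw [hBval]
    exact tsum_aux_le _ (fun n => (hindB t n).1) (fun n => (hindB t n).2)
  -- the comparison sequence
  set c : ℕ → ℝ := fun t =>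
    ∑' n, (if φ^[t] (e n) ∈ F then (1:ℝ) else 0) / 2 ^ (n + 1) with hc
  have hindC : ∀ t n, 0 ≤ (if φ^[t] (e n) ∈ F then (1:ℝ) else 0) ∧
      (if φ^[t] (e n) ∈ F then (1:ℝ) else 0) ≤ 1 := by
    intro t n; split_ifs <;> norm_num
  have hsumC : ∀ t, Summable fun n => (if φ^[t] (e n) ∈ F then (1:ℝ) else 0) / 2 ^ (n + 1) :=
    fun t => summable_aux _ (fun n => (hindC t n).1) (fun n => (hindC t n).2)
  -- pointwise bound on |A - B|
  have hpoint : ∀ t n, |fA t n - fB t n| ≤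
      (if φ^[t] (e n) ∈ F then (1:ℝ) else 0) / 2 ^ (n + 1) := by
    intro t n
    simp only [hfA, hfB]
    by_cases hmem : φ^[t] (e n) ∈ F
    · simp only [hmem, if_true]
      rw [div_sub_div_same, abs_div, abs_of_pos (a := (2:ℝ)^(n+1)) (by positivity)]
      refine div_le_div_of_nonneg_right ?_ (by positivity)
      split_ifs <;> norm_num
    · have h1 : x (φ^[t] (e n)) = z (φ^[t] (e n)) := hxz _ hmem
      have h2 : y (φ^[t] (e n)) = w (φ^[t] (e n)) := hyw _ hmem
      rw [h1, h2]
      simp [hmem]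
  have habs : ∀ t, |A t - B t| ≤ c t := by
    intro t
    rw [hAval, hBval, abs_sub_le_iff]
    simp only [hc]
    constructor
    · rw [sub_le_iff_le_add, ← Summable.tsum_add (hsumC t) (hsumB t)]
      refine Summable.tsum_le_tsum (fun n => ?_) (hsumA t) ((hsumC t).add (hsumB t))
      have := (abs_sub_le_iff.mp (hpoint t n)).1
      linarith
    · rw [sub_le_iff_le_add, ← Summable.tsum_add (hsumC t) (hsumA t)]
      refine Summable.tsum_le_tsum (fun n => ?_) (hsumB t) ((hsumC t).add (hsumA t))
      have := (abs_sub_le_iff.mp (hpoint t n)).2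
      linarith
  -- each orbit hits F only finitely often
  have hfin : ∀ n : ℕ, {t : ℕ | φ^[t] (e n) ∈ F}.Finite := by
    intro n
    have : {t : ℕ | φ^[t] (e n) ∈ F} = (fun t : ℕ => φ^[t] (e n)) ⁻¹' F := rfl
    rw [this]
    exact Set.Finite.preimage ((orbit_inj φ hφ (e n)).injOn) hF
  -- c tends to 0
  have hctends : Tendsto c atTop (𝓝 0) := by
    rw [NormedAddCommGroup.tendsto_nhds_zero]
    intro ε hε
    obtain ⟨N, hN⟩ := exists_pow_lt_of_lt_one hε (by norm_num : (1:ℝ)/2 < 1)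
    have hU : (⋃ n ∈ Finset.range N, {t : ℕ | φ^[t] (e n) ∈ F}).Finite :=
      Set.Finite.biUnion (Finset.range N).finite_toSet (fun n _ => hfin n)
    have hev := hU.eventually_cofinite_notMem
    rw [Nat.cofinite_eq_atTop] at hev
    filter_upwards [hev] with t ht
    have hnot : ∀ n < N, φ^[t] (e n) ∉ F := by
      intro n hn hmem
      exact ht (Set.mem_biUnion (Finset.mem_range.mpr hn) hmem)
    have hle : c t ≤ (1/2 : ℝ)^N := by
      simp only [hc]
      have hsplit := (Summable.sum_add_tsum_nat_add (f := fun n =>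
        (if φ^[t] (e n) ∈ F then (1:ℝ) else 0) / 2 ^ (n + 1)) N (hsumC t)).symm
      rw [hsplit]
      have hzero : ∑ n ∈ Finset.range N,
          (if φ^[t] (e n) ∈ F then (1:ℝ) else 0) / 2 ^ (n + 1) = 0 := by
        refine Finset.sum_eq_zero fun n hn => ?_
        rw [if_neg (hnot n (Finset.mem_range.mp hn))]
        simp
      rw [hzero, zero_add]
      have hsum1 : Summable fun n : ℕ => (1:ℝ)/2^(n+N+1) := by
        refine (sumHalf.mul_left ((1/2:ℝ)^N)).congr fun n => ?_
        rw [show n+N+1 = N+(n+1) from by omega, pow_add]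
        simp only [one_div, inv_pow]
        ring
      have htail : ∑' n : ℕ,
          (if φ^[t] (e (n + N)) ∈ F then (1:ℝ) else 0) / 2 ^ (n + N + 1) ≤
          ∑' n : ℕ, (1:ℝ)/2^(n+N+1) := by
        refine Summable.tsum_le_tsum (fun n => ?_) ?_ hsum1
        · refine div_le_div_of_nonneg_right ?_ (by positivity)
          split_ifs <;> norm_num
        · exact ((summable_nat_add_iff
            (f := fun m => (if φ^[t] (e m) ∈ F then (1:ℝ) else 0)/2^(m+1)) N).mpr (hsumC t))
      refine htail.trans ?_
      have : ∑' n : ℕ, (1:ℝ)/2^(n+N+1) = (1/2:ℝ)^N * ∑' n : ℕ, (1:ℝ)/2^(n+1) := by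
        rw [← tsum_mul_left]
        refine tsum_congr fun n => ?_
        rw [show n+N+1 = N+(n+1) from by omega, pow_add]
        simp only [one_div, inv_pow]
        ring
      rw [this, tsumHalf, mul_one]
    have hc0 : 0 ≤ c t := tsum_nonneg fun n => div_nonneg (hindC t n).1 (by positivity)
    rw [Real.norm_eq_abs, abs_of_nonneg hc0]
    exact lt_of_le_of_lt hle hN
  -- A - B tends to 0
  have hdiff : Tendsto (fun t => A t - B t) atTop (𝓝 0) := by
    refine squeeze_zero_norm (fun t => ?_) hctends
    rw [Real.norm_eq_abs]; exact habs t
  have hlimsup := limsup_eq_aux A B hA0 hA1 hB0 hB1 hdiff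
  have hliminf := liminf_eq_aux A B hA0 hA1 hB0 hB1 hdiff
  obtain ⟨hli, hls⟩ := hxy
  refine ⟨⟨?_, ?_⟩, hlimsup⟩
  · rw [← hliminf]; exact hli
  · rw [← hlimsup]; exact hls
end

section
/- If φ : Γ → Γ has no periodic point, then there exists μ > 0 such that for every x ∈ X^Γ there exists y ∈ X^Γ with (x, y) ∈ S(X^Γ, σ_φ) and limsup_{t→∞} D(σ_φ^t(x), σ_φ^t(y)) = μ. -/
open Filter Topology

section Aux

variable {Γ : Type*}

lemma stmt6_iter_ne {φ : Γ → Γ} (hφ : ¬ ∃ a : Γ, ∃ n : ℕ, 1 ≤ n ∧ φ^[n] a = a) (a : Γ) :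
    ∀ s t : ℕ, s < t → φ^[s] a ≠ φ^[t] a := by
  push_neg at hφ
  intro s t h heq
  refine hφ (φ^[s] a) (t - s) (by omega) ?_
  calc φ^[t - s] (φ^[s] a) = φ^[t - s + s] a := (Function.iterate_add_apply φ (t - s) s a).symm
    _ = φ^[t] a := by rw [Nat.sub_add_cancel h.le]
    _ = φ^[s] a := heq.symm

lemma stmt6_iter_inj {φ : Γ → Γ} (hφ : ¬ ∃ a : Γ, ∃ n : ℕ, 1 ≤ n ∧ φ^[n] a = a) (a : Γ) :
    Function.Injective fun t : ℕ => φ^[t] a := by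
  intro s t h
  by_contra hne
  rcases lt_or_gt_of_ne hne with hlt | hlt
  · exact stmt6_iter_ne hφ a s t hlt h
  · exact stmt6_iter_ne hφ a t s hlt h.symm

lemma stmt6_escape {φ : Γ → Γ} (hφ : ¬ ∃ a : Γ, ∃ n : ℕ, 1 ≤ n ∧ φ^[n] a = a) (e : ℕ ≃ Γ)
    (k T : ℕ) (B : Finset Γ) : ∃ t, T ≤ t ∧ ∀ n < k, φ^[t] (e n) ∉ B := by
  have hfin : ∀ n : ℕ, {t : ℕ | φ^[t] (e n) ∈ B}.Finite := fun n =>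
    Set.Finite.preimage ((stmt6_iter_inj hφ (e n)).injOn) B.finite_toSet
  have hU : (⋃ n ∈ Finset.range k, {t : ℕ | φ^[t] (e n) ∈ B}).Finite :=
    Set.Finite.biUnion (Finset.range k).finite_toSet fun n _ => hfin n
  obtain ⟨M, hM⟩ := hU.bddAbove
  refine ⟨max T (M + 1), le_max_left _ _, ?_⟩
  intro n hn hmem
  have hmem' : max T (M + 1) ∈ ⋃ n ∈ Finset.range k, {t : ℕ | φ^[t] (e n) ∈ B} := by
    exact Set.mem_biUnion (Finset.mem_range.2 hn) hmem
  have := hM hmem'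
  omega

open scoped Classical in
/-- The recursively constructed sequence of (time, accumulated forbidden set). -/
noncomputable def stmt6_seq {φ : Γ → Γ} (hφ : ¬ ∃ a : Γ, ∃ n : ℕ, 1 ≤ n ∧ φ^[n] a = a)
    (e : ℕ ≃ Γ) : ℕ → ℕ × Finset Γ :=
  fun j => Nat.rec ((0 : ℕ), (∅ : Finset Γ))
    (fun j p =>
      ((stmt6_escape hφ e (j + 1) (p.1 + 1) p.2).choose,
        p.2 ∪ (Finset.range (j + 1)).image
          (fun n => φ^[(stmt6_escape hφ e (j + 1) (p.1 + 1) p.2).choose] (e n)))) j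

end Aux

/-- If `φ : Γ → Γ` has no periodic point, then there exists `μ > 0` such
that for every `x ∈ X^Γ` there exists `y ∈ X^Γ` with `(x, y)` a scrambled pair of
`(X^Γ, σ_φ)` and `limsup D(σ_φ^t x, σ_φ^t y) = μ`. -/
theorem stmt6 {X Γ : Type*} [TopologicalSpace X] [DiscreteTopology X] [Finite X]
    [Nontrivial X] [Countable Γ] [Infinite Γ] (e : ℕ ≃ Γ) (φ : Γ → Γ)
    (hφ : ¬ ∃ a : Γ, ∃ n : ℕ, 1 ≤ n ∧ φ^[n] a = a) :
    ∃ μ > (0 : ℝ), ∀ x : Γ → X, ∃ y : Γ → X,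
      scrambledPair (gsD e) (gshift φ) x y ∧
        limsup (fun t : ℕ => gsD e ((gshift φ)^[t] x) ((gshift φ)^[t] y)) atTop = μ := by
  classical
  -- basic notation
  set T : ℕ → ℕ := fun j => (stmt6_seq hφ e j).1 with hT
  set B : ℕ → Finset Γ := fun j => (stmt6_seq hφ e j).2 with hB
  set F : ℕ → Finset Γ :=
    fun j => (Finset.range j).image (fun n => φ^[T j] (e n)) with hF
  have hseq : ∀ j : ℕ, stmt6_seq hφ e (j + 1) =
      ((stmt6_escape hφ e (j + 1) (T j + 1) (B j)).choose,
        B j ∪ (Finset.range (j + 1)).image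
          (fun n => φ^[(stmt6_escape hφ e (j + 1) (T j + 1) (B j)).choose] (e n))) :=
    fun j => rfl
  have hspec : ∀ j : ℕ, T j + 1 ≤ (stmt6_escape hφ e (j + 1) (T j + 1) (B j)).choose ∧
      ∀ n < j + 1, φ^[(stmt6_escape hφ e (j + 1) (T j + 1) (B j)).choose] (e n) ∉ B j :=
    fun j => (stmt6_escape hφ e (j + 1) (T j + 1) (B j)).choose_spec
  have hT_succ : ∀ j, T (j + 1) = (stmt6_escape hφ e (j + 1) (T j + 1) (B j)).choose :=
    fun j => by simp only [hT]; rw [hseq j]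
  have hB_succ : ∀ j, B (j + 1) = B j ∪ F (j + 1) := by
    intro j
    simp only [hB, hF, hT]
    rw [hseq j]
  have hT_lt : ∀ j, T j < T (j + 1) := by
    intro j; rw [hT_succ j]; have := (hspec j).1; omega
  have hT_mono : StrictMono T := strictMono_nat_of_lt_succ hT_lt
  have hT_ge : ∀ j, j ≤ T j := fun j => hT_mono.le_apply
  have hF_escape : ∀ j, ∀ n < j + 1, φ^[T (j + 1)] (e n) ∉ B j := by
    intro j n hn; rw [hT_succ j]; exact (hspec j).2 n hn
  have hB_mono : ∀ i j, i ≤ j → B i ⊆ B j := by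
    intro i j hij
    induction j, hij using Nat.le_induction with
    | base => exact Finset.Subset.refl _
    | succ m hm ih => exact ih.trans (by rw [hB_succ m]; exact Finset.subset_union_left)
  have hF_sub_B : ∀ j, 1 ≤ j → F j ⊆ B j := by
    intro j hj
    obtain ⟨j', rfl⟩ : ∃ j', j = j' + 1 := ⟨j - 1, by omega⟩
    rw [hB_succ j']; exact Finset.subset_union_right
  have hF_disj : ∀ i j, 1 ≤ i → i < j → Disjoint (F i) (F j) := by
    intro i j hi hij
    obtain ⟨j, rfl⟩ : ∃ j', j = j' + 1 := ⟨j - 1, by omega⟩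
    rw [Finset.disjoint_right]
    intro c hcj hci
    simp only [hF, Finset.mem_image, Finset.mem_range] at hcj
    obtain ⟨n, hn, rfl⟩ := hcj
    exact hF_escape j n hn (hB_mono i j (by omega) (hF_sub_B i hi hci))
  -- the scrambling set
  set S : Set Γ := {c | ∃ j, Odd j ∧ c ∈ F j} with hS
  have hS_odd : ∀ j, Odd j → ∀ c ∈ F j, c ∈ S := fun j hj c hc => ⟨j, hj, hc⟩
  have hS_even : ∀ j, Even j → ∀ c ∈ F j, c ∉ S := by
    rintro j hj c hc ⟨i, hi, hci⟩
    have hi1 : 1 ≤ i := hi.pos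
    have hij : i ≠ j := by rintro rfl; exact (Nat.not_even_iff_odd.2 hi) hj
    rcases lt_or_gt_of_ne hij with h | h
    · exact (Finset.disjoint_left.1 (hF_disj i j hi1 h)) hci hc
    · exact (Finset.disjoint_left.1 (hF_disj j i (by
        rcases Nat.eq_zero_or_pos j with rfl | hj0
        · simp [hF] at hc
        · exact hj0) h)) hc hci
  refine ⟨1, one_pos, fun x => ?_⟩
  -- the companion point y
  set g : X → X := fun v => (exists_ne v).choose with hg
  have hg_ne : ∀ v, g v ≠ v := fun v => (exists_ne v).choose_spec
  set y : Γ → X := fun c => if c ∈ S then g (x c) else x c with hy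
  have hxy : ∀ c : Γ, (x c = y c ↔ c ∉ S) := by
    intro c
    by_cases hc : c ∈ S <;> simp [hy, hc, (hg_ne (x c)).symm, Ne.symm (hg_ne (x c))]
  -- iterates of the shift
  have hgit : ∀ (t : ℕ) (z : Γ → X), (gshift φ)^[t] z = z ∘ φ^[t] := by
    intro t
    induction t with
    | zero => intro z; rfl
    | succ t ih =>
      intro z
      rw [Function.iterate_succ_apply, ih, Function.iterate_succ']
      rfl
  -- the distance sequence
  set d : ℕ → ℝ := fun t => gsD e ((gshift φ)^[t] x) ((gshift φ)^[t] y) with hd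
  set f : ℕ → ℕ → ℝ :=
    fun t n => (if φ^[t] (e n) ∈ S then (1 : ℝ) else 0) / 2 ^ (n + 1) with hf'
  have hgeo : Summable (fun n : ℕ => (1 : ℝ) / 2 ^ (n + 1)) :=
    (summable_geometric_two' 1).congr fun n => by rw [pow_succ]; ring
  have htsum_geo : ∑' n : ℕ, (1 : ℝ) / 2 ^ (n + 1) = 1 := by
    rw [tsum_congr (fun n : ℕ => by rw [pow_succ]; ring :
      ∀ n : ℕ, (1 : ℝ) / 2 ^ (n + 1) = (1 : ℝ) / 2 / 2 ^ n)]
    exact tsum_geometric_two' 1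
  have hf_nonneg : ∀ t n, 0 ≤ f t n := by
    intro t n
    apply div_nonneg _ (by positivity)
    split <;> norm_num
  have hf_le : ∀ t n, f t n ≤ (1 : ℝ) / 2 ^ (n + 1) := by
    intro t n
    by_cases hm : φ^[t] (e n) ∈ S
    · simp [hf', hm]
    · simp only [hf', if_neg hm, zero_div]
      positivity
  have hf_summable : ∀ t, Summable (f t) :=
    fun t => Summable.of_nonneg_of_le (hf_nonneg t) (hf_le t) hgeo
  have hd_eq : ∀ t, d t = ∑' n, f t n := by
    intro t
    rw [hd]
    simp only [gsD, hgit]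
    congr 1; funext n
    simp only [Function.comp_apply, hf']
    by_cases hmem : φ^[t] (e n) ∈ S
    · rw [if_neg (fun h => ((hxy _).1 h) hmem), if_pos hmem]
    · rw [if_pos ((hxy _).2 hmem), if_neg hmem]
  have hd_nonneg : ∀ t, 0 ≤ d t := by
    intro t; rw [hd_eq]; exact tsum_nonneg (hf_nonneg t)
  have hd_le_one : ∀ t, d t ≤ 1 := by
    intro t; rw [hd_eq, ← htsum_geo]
    exact Summable.tsum_le_tsum (hf_le t) (hf_summable t) hgeo
  have hsum_range : ∀ k : ℕ, ∑ n ∈ Finset.range k, (1 : ℝ) / 2 ^ (n + 1) = 1 - (1 / 2) ^ k := by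
    intro k
    induction k with
    | zero => simp
    | succ k ih =>
      rw [Finset.sum_range_succ, ih]
      have h2 : ((2 : ℝ)) ^ (k + 1) = 2 ^ k * 2 := pow_succ 2 k
      rw [h2, pow_succ]
      have hk : ((2 : ℝ)) ^ k ≠ 0 := by positivity
      field_simp
      have h3 : (1/2:ℝ)^k * 2^k = 1 := by rw [← mul_pow]; norm_num
      linear_combination (-1 : ℝ) * h3
  have hd_lower : ∀ k t, (∀ n < k, φ^[t] (e n) ∈ S) → 1 - (1 / 2 : ℝ) ^ k ≤ d t := by
    intro k t h
    rw [hd_eq, ← hsum_range k]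
    have : ∑ n ∈ Finset.range k, (1 : ℝ) / 2 ^ (n + 1) = ∑ n ∈ Finset.range k, f t n := by
      apply Finset.sum_congr rfl
      intro n hn
      simp only [hf']
      rw [if_pos (h n (Finset.mem_range.1 hn))]
    rw [this]
    exact Summable.sum_le_tsum _ (fun n _ => hf_nonneg t n) (hf_summable t)
  have hd_upper : ∀ k t, (∀ n < k, φ^[t] (e n) ∉ S) → d t ≤ (1 / 2 : ℝ) ^ k := by
    intro k t h
    rw [hd_eq]
    have hsum0 : ∑ n ∈ Finset.range k, f t n = 0 := by
      apply Finset.sum_eq_zero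
      intro n hn
      simp only [hf']
      rw [if_neg (h n (Finset.mem_range.1 hn))]
      simp
    have := Summable.sum_add_tsum_nat_add (f := f t) k (hf_summable t)
    rw [hsum0, zero_add] at this
    rw [← this]
    have hshift : Summable (fun n => f t (n + k)) :=
      (summable_nat_add_iff k).2 (hf_summable t)
    have hgeo' : Summable (fun n : ℕ => ((1 / 2 : ℝ) ^ k) / 2 ^ (n + 1)) :=
      (summable_geometric_two' ((1 / 2 : ℝ) ^ k)).congr fun n => by rw [pow_succ]; ring
    calc ∑' n, f t (n + k) ≤ ∑' n : ℕ, ((1 / 2 : ℝ) ^ k) / 2 ^ (n + 1) := by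
          apply Summable.tsum_le_tsum _ hshift hgeo'
          intro n
          calc f t (n + k) ≤ (1 : ℝ) / 2 ^ (n + k + 1) := hf_le t (n + k)
            _ = ((1 / 2 : ℝ) ^ k) / 2 ^ (n + 1) := by
                rw [div_pow]
                field_simp
                ring
      _ = (1 / 2 : ℝ) ^ k := by
          rw [tsum_congr (fun n : ℕ => by rw [pow_succ]; ring :
            ∀ n : ℕ, ((1 / 2 : ℝ) ^ k) / 2 ^ (n + 1) = (1 / 2 : ℝ) ^ k / 2 / 2 ^ n)]
          exact tsum_geometric_two' _
  -- frequently witnesses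
  have hmem_F : ∀ j, ∀ n < j, φ^[T j] (e n) ∈ F j := by
    intro j n hn
    rw [hF]
    exact Finset.mem_image.2 ⟨n, Finset.mem_range.2 hn, rfl⟩
  have hfreq_in : ∀ k : ℕ, ∃ᶠ t in atTop, ∀ n < k, φ^[t] (e n) ∈ S := by
    intro k
    rw [frequently_atTop]
    intro a
    refine ⟨T (2 * (max k a) + 1), ?_, ?_⟩
    · calc a ≤ max k a := le_max_right _ _
        _ ≤ 2 * (max k a) + 1 := by omega
        _ ≤ T (2 * (max k a) + 1) := hT_ge _
    · intro n hn
      exact hS_odd _ (Nat.odd_iff.2 (by omega)) _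
        (hmem_F _ n (by have := le_max_left k a; omega))
  have hfreq_out : ∀ k : ℕ, ∃ᶠ t in atTop, ∀ n < k, φ^[t] (e n) ∉ S := by
    intro k
    rw [frequently_atTop]
    intro a
    refine ⟨T (2 * (max k a) + 2), ?_, ?_⟩
    · calc a ≤ max k a := le_max_right _ _
        _ ≤ 2 * (max k a) + 2 := by omega
        _ ≤ T (2 * (max k a) + 2) := hT_ge _
    · intro n hn
      exact hS_even _ (Nat.even_iff.2 (by omega)) _
        (hmem_F _ n (by have := le_max_left k a; omega))
  -- boundedness
  have hbdd_above : IsBoundedUnder (· ≤ ·) atTop d := isBoundedUnder_of ⟨1, hd_le_one⟩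
  have hbdd_below : IsBoundedUnder (· ≥ ·) atTop d := isBoundedUnder_of ⟨0, hd_nonneg⟩
  -- limsup = 1
  have hlimsup_le : limsup d atTop ≤ 1 :=
    limsup_le_of_le hbdd_below.isCoboundedUnder_le (Eventually.of_forall hd_le_one)
  have hlimsup_ge : (1 : ℝ) ≤ limsup d atTop := by
    have hk : ∀ k : ℕ, 1 - (1 / 2 : ℝ) ^ k ≤ limsup d atTop := by
      intro k
      apply le_limsup_of_frequently_le _ hbdd_above
      exact (hfreq_in k).mono fun t ht => hd_lower k t ht
    have htend : Tendsto (fun k : ℕ => 1 - (1 / 2 : ℝ) ^ k) atTop (𝓝 1) := by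
      have h0 : Tendsto (fun k : ℕ => ((1 : ℝ) / 2) ^ k) atTop (𝓝 0) :=
        tendsto_pow_atTop_nhds_zero_of_lt_one (by norm_num) (by norm_num)
      have := tendsto_const_nhds (x := (1 : ℝ)) (f := atTop (α := ℕ)) |>.sub h0
      simpa using this
    exact le_of_tendsto htend (Eventually.of_forall hk)
  have hlimsup : limsup d atTop = 1 := le_antisymm hlimsup_le hlimsup_ge
  -- liminf = 0
  have hliminf_ge : (0 : ℝ) ≤ liminf d atTop :=
    le_liminf_of_le hbdd_above.isCoboundedUnder_ge (Eventually.of_forall hd_nonneg)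
  have hliminf_le : liminf d atTop ≤ 0 := by
    have hk : ∀ k : ℕ, liminf d atTop ≤ (1 / 2 : ℝ) ^ k := by
      intro k
      apply liminf_le_of_frequently_le _ hbdd_below
      exact (hfreq_out k).mono fun t ht => hd_upper k t ht
    have htend : Tendsto (fun k : ℕ => ((1 : ℝ) / 2) ^ k) atTop (𝓝 0) :=
      tendsto_pow_atTop_nhds_zero_of_lt_one (by norm_num) (by norm_num)
    exact ge_of_tendsto htend (Eventually.of_forall hk)
  have hliminf : liminf d atTop = 0 := le_antisymm hliminf_le hliminf_ge
  exact ⟨y, ⟨hliminf, by rw [hlimsup]; norm_num⟩, hlimsup⟩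
end

section
/- If the generalized shift dynamical system (X^Γ, σ_φ) is densely chaotic, i.e. the set S(X^Γ, σ_φ) of scrambled pairs is dense in X^Γ × X^Γ, then φ : Γ → Γ has no periodic point. -/
open Filter Topology

open scoped Classical in
lemma gsD_summable {X Γ : Type*} (e : ℕ ≃ Γ) (x y : Γ → X) :
    Summable (fun n : ℕ => (if x (e n) = y (e n) then (0 : ℝ) else 1) / 2 ^ (n + 1)) := by
  have hg : Summable (fun n : ℕ => (1:ℝ) / 2 ^ (n + 1)) := by
    have := (summable_nat_add_iff 1).2 summable_geometric_two
    simpa [div_pow] using this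
  refine Summable.of_nonneg_of_le (fun n => by positivity) (fun n => ?_) hg
  apply div_le_div_of_nonneg_right ?_ (by positivity)
  split <;> norm_num

open scoped Classical in
lemma gsD_le_one {X Γ : Type*} (e : ℕ ≃ Γ) (x y : Γ → X) : gsD e x y ≤ 1 := by
  have hg : Summable (fun n : ℕ => (1:ℝ) / 2 ^ (n + 1)) := by
    have := (summable_nat_add_iff 1).2 summable_geometric_two
    simpa [div_pow] using this
  have hle := Summable.tsum_le_tsum
    (f := fun n : ℕ => (if x (e n) = y (e n) then (0 : ℝ) else 1) / 2 ^ (n + 1))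
    (g := fun n : ℕ => (1:ℝ) / 2 ^ (n + 1))
    (fun n => by
      apply div_le_div_of_nonneg_right ?_ (by positivity)
      split <;> norm_num) (gsD_summable e x y) hg
  calc gsD e x y ≤ ∑' n : ℕ, (1:ℝ) / 2 ^ (n + 1) := hle
    _ = ∑' n : ℕ, (1:ℝ) / 2 / 2 ^ n := by
        congr 1; funext n; rw [pow_succ']; ring
    _ = 1 := tsum_geometric_two' 1

open scoped Classical in
lemma gsD_ge {X Γ : Type*} (e : ℕ ≃ Γ) (x y : Γ → X) (b : Γ) (h : x b ≠ y b) :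
    (1:ℝ) / 2 ^ ((e.symm b : ℕ) + 1) ≤ gsD e x y := by
  have := Summable.le_tsum (gsD_summable e x y) (e.symm b)
    (fun n _ => by positivity)
  simpa [gsD, Equiv.apply_symm_apply, h] using this

lemma gshift_iterate {X Γ : Type*} (φ : Γ → Γ) (m : ℕ) (x : Γ → X) :
    (gshift φ)^[m] x = x ∘ φ^[m] := by
  induction m with
  | zero => simp
  | succ k ih =>
      rw [Function.iterate_succ_apply', ih]
      funext c
      simp [gshift, Function.comp, Function.iterate_succ_apply]

/-- If the set of scrambled pairs of the generalized shift system
`(X^Γ, σ_φ)` is dense in `X^Γ × X^Γ`, then `φ : Γ → Γ` has no periodic point. -/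
theorem stmt7 {X Γ : Type*} [TopologicalSpace X] [DiscreteTopology X] [Finite X]
    [Nontrivial X] [Countable Γ] [Infinite Γ] (e : ℕ ≃ Γ) (φ : Γ → Γ)
    (hdense : Dense {p : (Γ → X) × (Γ → X) | scrambledPair (gsD e) (gshift φ) p.1 p.2}) :
    ¬ ∃ a : Γ, ∃ n : ℕ, 1 ≤ n ∧ φ^[n] a = a := by
  rintro ⟨a, n, hn, ha⟩
  -- the open set of pairs differing on the orbit of `a`
  set U : Set ((Γ → X) × (Γ → X)) :=
    {p | ∀ k < n, p.1 (φ^[k] a) ≠ p.2 (φ^[k] a)} with hU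
  have hUopen : IsOpen U := by
    have : U = ⋂ k ∈ Finset.range n,
        {p : (Γ → X) × (Γ → X) | p.1 (φ^[k] a) ≠ p.2 (φ^[k] a)} := by
      ext p; simp [hU]
    rw [this]
    apply isOpen_biInter_finset
    intro k _
    have hcont : Continuous (fun p : (Γ → X) × (Γ → X) =>
        (p.1 (φ^[k] a), p.2 (φ^[k] a))) := by
      exact ((continuous_apply _).comp continuous_fst).prodMk
        ((continuous_apply _).comp continuous_snd)
    have : {p : (Γ → X) × (Γ → X) | p.1 (φ^[k] a) ≠ p.2 (φ^[k] a)} =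
        (fun p : (Γ → X) × (Γ → X) => (p.1 (φ^[k] a), p.2 (φ^[k] a))) ⁻¹'
          {q : X × X | q.1 ≠ q.2} := rfl
    rw [this]
    exact (isOpen_discrete _).preimage hcont
  have hUne : U.Nonempty := by
    have hx : Nonempty X := inferInstance
    obtain ⟨x⟩ := hx
    choose y hy using fun c : X => exists_ne c
    exact ⟨((fun _ => x), (fun _ => y x)), fun k _ => (hy x).symm⟩
  obtain ⟨p, hp, hpU⟩ := hdense.exists_mem_open hUopen hUne
  obtain ⟨hlim, _⟩ := hp
  -- lower bound on distances along the orbit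
  set c : ℝ := (1:ℝ) / 2 ^ ((e.symm a : ℕ) + 1) with hc
  have hcpos : 0 < c := by positivity
  have hbound : ∀ m : ℕ,
      c ≤ gsD e ((gshift φ)^[m] p.1) ((gshift φ)^[m] p.2) := by
    intro m
    rw [gshift_iterate, gshift_iterate]
    apply gsD_ge
    have horb : φ^[m] a = φ^[m % n] a := by
      conv_lhs => rw [← Nat.mod_add_div m n]
      rw [Function.iterate_add_apply, Function.iterate_mul,
        Function.iterate_fixed ha]
    simp only [Function.comp_apply, horb]
    exact hpU (m % n) (Nat.mod_lt _ (by omega))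
  have hcle : c ≤ liminf
      (fun m : ℕ => gsD e ((gshift φ)^[m] p.1) ((gshift φ)^[m] p.2)) atTop := by
    apply le_liminf_of_le
    · exact isCoboundedUnder_ge_of_le atTop (x := 1)
        (fun m => gsD_le_one e _ _)
    · exact Eventually.of_forall hbound
  rw [hlim] at hcle
  exact absurd hcle (not_le.mpr hcpos)
end

section
/- If φ : Γ → Γ has at least one non-quasi-periodic point (i.e. W(φ) ≠ ∅), then the generalized shift dynamical system (X^Γ, σ_φ) is strongly sensitive: there exists ε > 0 such that for every x ∈ X^Γ and every open neighborhood U of x there exist y ∈ U and n₀ ≥ 0 with D(σ_φ^n(x), σ_φ^n(y)) ≥ ε for all n ≥ n₀. -/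
open Filter Topology

/-- If `φ : Γ → Γ` has a non-quasi-periodic point, then `(X^Γ, σ_φ)` is
strongly sensitive: there exists `ε > 0` such that for every `x ∈ X^Γ` and every open
neighborhood `U` of `x` there exist `y ∈ U` and `n₀ ≥ 0` with
`D(σ_φ^n x, σ_φ^n y) ≥ ε` for all `n ≥ n₀`. -/
theorem stmt10 {X Γ : Type*} [TopologicalSpace X] [DiscreteTopology X] [Finite X]
    [Nontrivial X] [Countable Γ] [Infinite Γ] (e : ℕ ≃ Γ) (φ : Γ → Γ)
    (hφ : ∃ a : Γ, ¬ ∃ n m : ℕ, 1 ≤ m ∧ m < n ∧ φ^[n] a = φ^[m] a) :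
    ∃ ε > (0 : ℝ), ∀ x : Γ → X, ∀ U : Set (Γ → X), IsOpen U → x ∈ U →
      ∃ y ∈ U, ∃ n₀ : ℕ, ∀ n ≥ n₀,
        ε ≤ gsD e ((gshift φ)^[n] x) ((gshift φ)^[n] y) := by

  classical
  obtain ⟨a, ha⟩ := hφ
  -- all iterates of a are distinct
  have key : ∀ m n : ℕ, m < n → φ^[m] a ≠ φ^[n] a := by
    intro m n hmn heq
    rcases Nat.eq_zero_or_pos m with hm | hm
    · subst hm
      simp only [Function.iterate_zero, id_eq] at heq
      apply ha
      refine ⟨n + n, n, hmn, by omega, ?_⟩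
      rw [Function.iterate_add_apply, ← heq]
      exact heq.symm
    · exact ha ⟨n, m, hm, hmn, heq.symm⟩
  have hinj : Function.Injective (fun m : ℕ => φ^[m] a) := by
    intro m n h
    by_contra hne
    rcases Nat.lt_or_ge m n with h1 | h1
    · exact key m n h1 h
    · exact key n m (lt_of_le_of_ne h1 (Ne.symm hne)) h.symm
  -- choose a "different value" function
  have hc : ∀ v : X, ∃ w : X, w ≠ v := fun v => exists_ne v
  choose c hcne using hc
  set k : ℕ := e.symm a with hk
  refine ⟨(1 / 2 : ℝ) ^ (k + 1), by positivity, fun x U hU hxU => ?_⟩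
  obtain ⟨I, u, hu, hsub⟩ := isOpen_pi_iff.mp hU x hxU
  have hS : ((fun m : ℕ => φ^[m] a) ⁻¹' (I : Set Γ)).Finite :=
    Set.Finite.preimage hinj.injOn I.finite_toSet
  obtain ⟨B, hB⟩ := hS.bddAbove
  set N : ℕ := B + 1 with hN
  set y : Γ → X := fun b => if ∃ m : ℕ, N ≤ m ∧ φ^[m] a = b then c (x b) else x b with hy
  have hyU : y ∈ U := by
    apply hsub
    intro b hb
    have hyb : y b = x b := by
      rw [hy]
      simp only
      rw [if_neg]
      rintro ⟨m, hm, heq⟩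
      have : m ∈ (fun m : ℕ => φ^[m] a) ⁻¹' (I : Set Γ) := by
        simp [heq, hb]
      have := hB this
      omega
    rw [hyb]
    exact (hu b hb).2
  have hiter : ∀ (n : ℕ) (z : Γ → X), (gshift φ)^[n] z = z ∘ φ^[n] := by
    intro n
    induction n with
    | zero => intro z; rfl
    | succ n ih =>
      intro z
      rw [Function.iterate_succ_apply, ih]
      ext b
      simp only [gshift, Function.comp_apply]
      exact congrArg z ((Function.iterate_succ_apply' φ n b).symm.trans
        (Function.iterate_succ_apply φ n b))
  refine ⟨y, hyU, N, fun n hn => ?_⟩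
  rw [hiter, hiter]
  have hxyne : (x ∘ φ^[n]) (e k) ≠ (y ∘ φ^[n]) (e k) := by
    have hek : e k = a := e.apply_symm_apply a
    simp only [Function.comp_apply, hek]
    have : y (φ^[n] a) = c (x (φ^[n] a)) := by
      rw [hy]
      simp only
      rw [if_pos ⟨n, hn, rfl⟩]
    rw [this]
    exact (hcne _).symm
  -- lower bound on gsD by the single term at k
  have hterm : ∀ j : ℕ,
      (0:ℝ) ≤ (if (x ∘ φ^[n]) (e j) = (y ∘ φ^[n]) (e j) then (0:ℝ) else 1) / 2 ^ (j + 1) := by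
    intro j; positivity
  have hsum : Summable (fun j : ℕ =>
      (if (x ∘ φ^[n]) (e j) = (y ∘ φ^[n]) (e j) then (0:ℝ) else 1) / 2 ^ (j + 1)) := by
    refine Summable.of_nonneg_of_le hterm (fun j => ?_) (summable_geometric_two.mul_left (1/2))
    ·
      have h1 : (if (x ∘ φ^[n]) (e j) = (y ∘ φ^[n]) (e j) then (0:ℝ) else 1) ≤ 1 := by
        split <;> norm_num
      calc (if (x ∘ φ^[n]) (e j) = (y ∘ φ^[n]) (e j) then (0:ℝ) else 1) / 2 ^ (j + 1)
          ≤ 1 / 2 ^ (j + 1) := by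
            apply div_le_div_of_nonneg_right h1 (by positivity) |>.trans_eq rfl
        _ = (1/2 : ℝ) * (1/2) ^ j := by
            rw [pow_succ]
            ring_nf
            norm_num
  have hle := Summable.le_tsum hsum k (fun j _ => hterm j)
  rw [if_neg hxyne] at hle
  calc (1/2 : ℝ) ^ (k + 1) = 1 / 2 ^ (k + 1) := by rw [one_div, inv_pow, one_div]
    _ ≤ _ := by
        refine hle.trans_eq ?_
        rfl
end
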